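/- Let k be a local field, V a finite-dimensional normed k-vector space, and f = (f₁,…,f_r) : V → k^r a polynomial map; let d ≥ 1 be the maximum of the degrees of the components f_i and put ‖f(x) − f(y)‖ := max_i |f_i(x) − f_i(y)|. Then there exists a constant C > 0 such that ‖f(x) − f(y)‖ ≤ C · ‖x‖^{d−1} · max_{0 ≤ s ≤ d} ‖x − y‖^s for all x, y ∈ V with ‖x‖ ≥ 1. -/

import Mathlib

open MvPolynomial

private lemma aux_pow {k : Type*} [NormedField k] {B ε : ℝ} (hB : 1 ≤ B) (hε : 0 ≤ ε)
    {a c : k} (ha : ‖a‖ ≤ B) (hc : ‖c‖ ≤ B) (hac : ‖a - c‖ ≤ ε) :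
    ∀ m : ℕ, B * ‖a ^ m - c ^ m‖ ≤ m * B ^ m * ε := by
  have hB0 : (0:ℝ) ≤ B := le_trans zero_le_one hB
  intro m
  induction m with
  | zero => simp
  | succ m ih =>
    have key : a ^ (m+1) - c ^ (m+1) = a * (a ^ m - c ^ m) + (a - c) * c ^ m := by ring
    have h1 : ‖a ^ (m+1) - c ^ (m+1)‖ ≤ ‖a‖ * ‖a ^ m - c ^ m‖ + ‖a - c‖ * ‖c ^ m‖ := by
      rw [key]; exact (norm_add_le _ _).trans (by rw [norm_mul, norm_mul])
    have hcm : ‖c ^ m‖ ≤ B ^ m := by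
      rw [norm_pow]; exact pow_le_pow_left₀ (norm_nonneg _) hc m
    have h2 : ‖a‖ * (B * ‖a ^ m - c ^ m‖) ≤ B * (m * B ^ m * ε) := by
      apply mul_le_mul ha ih (by positivity)  hB0
    have h3 : (B * ‖a - c‖) * ‖c ^ m‖ ≤ (B * ε) * B ^ m := by
      apply mul_le_mul (by nlinarith [norm_nonneg (a - c)]) hcm (norm_nonneg _) (by positivity)
    calc B * ‖a ^ (m+1) - c ^ (m+1)‖
        ≤ B * (‖a‖ * ‖a ^ m - c ^ m‖ + ‖a - c‖ * ‖c ^ m‖) := by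
          apply mul_le_mul_of_nonneg_left h1 hB0
      _ = ‖a‖ * (B * ‖a ^ m - c ^ m‖) + (B * ‖a - c‖) * ‖c ^ m‖ := by ring
      _ ≤ B * (m * B ^ m * ε) + (B * ε) * B ^ m := add_le_add h2 h3
      _ = (↑(m+1)) * B ^ (m+1) * ε := by push_cast; ring

private lemma aux_prod {k : Type*} [NormedField k] {ι : Type*} [DecidableEq ι] {B ε : ℝ}
    (hB : 1 ≤ B) (hε : 0 ≤ ε)
    (S : Finset ι) (u v : ι → k) (m : ι → ℕ)
    (hu : ∀ j ∈ S, ‖u j‖ ≤ B) (hv : ∀ j ∈ S, ‖v j‖ ≤ B)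
    (huv : ∀ j ∈ S, ‖u j - v j‖ ≤ ε) :
    B * ‖(∏ j ∈ S, u j ^ m j) - ∏ j ∈ S, v j ^ m j‖ ≤
      (∑ j ∈ S, m j) * B ^ (∑ j ∈ S, m j) * ε := by
  have hB0 : (0:ℝ) ≤ B := le_trans zero_le_one hB
  revert hu hv huv
  induction S using Finset.induction_on with
  | empty => simp
  | @insert a S hmem ih =>
    intro hu hv huv
    have hu' : ∀ j ∈ S, ‖u j‖ ≤ B := fun j hj => hu j (Finset.mem_insert_of_mem hj)
    have hv' : ∀ j ∈ S, ‖v j‖ ≤ B := fun j hj => hv j (Finset.mem_insert_of_mem hj)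
    have huv' : ∀ j ∈ S, ‖u j - v j‖ ≤ ε := fun j hj => huv j (Finset.mem_insert_of_mem hj)
    have ih' := ih hu' hv' huv'
    have hpow := aux_pow hB hε (hu a (Finset.mem_insert_self a S))
      (hv a (Finset.mem_insert_self a S)) (huv a (Finset.mem_insert_self a S)) (m a)
    have hPv : ‖∏ j ∈ S, v j ^ m j‖ ≤ B ^ (∑ j ∈ S, m j) := by
      rw [norm_prod]
      calc ∏ j ∈ S, ‖v j ^ m j‖ ≤ ∏ j ∈ S, B ^ m j := by
            apply Finset.prod_le_prod (fun j _ => norm_nonneg _)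
            intro j hj
            rw [norm_pow]; exact pow_le_pow_left₀ (norm_nonneg _) (hv' j hj) _
        _ = B ^ (∑ j ∈ S, m j) := Finset.prod_pow_eq_pow_sum _ _ _
    have hua : ‖u a ^ m a‖ ≤ B ^ m a := by
      rw [norm_pow]
      exact pow_le_pow_left₀ (norm_nonneg _) (hu a (Finset.mem_insert_self a S)) _
    rw [Finset.prod_insert hmem, Finset.prod_insert hmem, Finset.sum_insert hmem]
    have key : u a ^ m a * ∏ j ∈ S, u j ^ m j - v a ^ m a * ∏ j ∈ S, v j ^ m j
        = u a ^ m a * ((∏ j ∈ S, u j ^ m j) - ∏ j ∈ S, v j ^ m j)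
          + (u a ^ m a - v a ^ m a) * ∏ j ∈ S, v j ^ m j := by ring
    have h1 : ‖u a ^ m a * ∏ j ∈ S, u j ^ m j - v a ^ m a * ∏ j ∈ S, v j ^ m j‖
        ≤ ‖u a ^ m a‖ * ‖(∏ j ∈ S, u j ^ m j) - ∏ j ∈ S, v j ^ m j‖
          + ‖u a ^ m a - v a ^ m a‖ * ‖∏ j ∈ S, v j ^ m j‖ := by
      rw [key]; exact (norm_add_le _ _).trans (by rw [norm_mul, norm_mul])
    have h2 : ‖u a ^ m a‖ * (B * ‖(∏ j ∈ S, u j ^ m j) - ∏ j ∈ S, v j ^ m j‖)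
        ≤ B ^ m a * ((∑ j ∈ S, m j) * B ^ (∑ j ∈ S, m j) * ε) :=
      mul_le_mul hua ih' (by positivity) (by positivity)
    have h3 : (B * ‖u a ^ m a - v a ^ m a‖) * ‖∏ j ∈ S, v j ^ m j‖
        ≤ (m a * B ^ m a * ε) * B ^ (∑ j ∈ S, m j) :=
      mul_le_mul hpow hPv (norm_nonneg _) (by positivity)
    calc B * ‖u a ^ m a * ∏ j ∈ S, u j ^ m j - v a ^ m a * ∏ j ∈ S, v j ^ m j‖
        ≤ B * (‖u a ^ m a‖ * ‖(∏ j ∈ S, u j ^ m j) - ∏ j ∈ S, v j ^ m j‖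
            + ‖u a ^ m a - v a ^ m a‖ * ‖∏ j ∈ S, v j ^ m j‖) :=
          mul_le_mul_of_nonneg_left h1 hB0
      _ = ‖u a ^ m a‖ * (B * ‖(∏ j ∈ S, u j ^ m j) - ∏ j ∈ S, v j ^ m j‖)
            + (B * ‖u a ^ m a - v a ^ m a‖) * ‖∏ j ∈ S, v j ^ m j‖ := by ring
      _ ≤ B ^ m a * ((∑ j ∈ S, m j) * B ^ (∑ j ∈ S, m j) * ε)
            + (m a * B ^ m a * ε) * B ^ (∑ j ∈ S, m j) := add_le_add h2 h3
      _ = (↑(m a + ∑ j ∈ S, m j)) * B ^ (m a + ∑ j ∈ S, m j) * ε := by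
          push_cast; rw [pow_add]; ring


/-- Let `k` be a local field, `V` a finite-dimensional normed
`k`-vector space and `f = (f₁,…,f_r) : V → k^r` a polynomial map (written in
the coordinates of a basis `b`), `d ≥ 1` the maximum of the degrees of the
components.  Then there is `C > 0` such that
`max_i |f_i(x) − f_i(y)| ≤ C ‖x‖^{d−1} max_{0 ≤ s ≤ d} ‖x − y‖^s`
for all `x, y` with `‖x‖ ≥ 1`. -/
theorem stmt10 {k : Type*} [NontriviallyNormedField k] [LocallyCompactSpace k]
    {V : Type*} [NormedAddCommGroup V] [NormedSpace k V] [FiniteDimensional k V]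
    {n r d : ℕ} (hd : 1 ≤ d)
    (b : Module.Basis (Fin n) k V) (P : Fin r → MvPolynomial (Fin n) k)
    (f : Fin r → V → k)
    (hf : ∀ (i : Fin r) (v : V), f i v = eval (fun j => b.repr v j) (P i))
    (hdeg : d = Finset.univ.sup fun i : Fin r => (P i).totalDegree) :
    ∃ C > (0 : ℝ), ∀ x y : V, 1 ≤ ‖x‖ → ∀ i : Fin r,
      ‖f i x - f i y‖ ≤
        C * ‖x‖ ^ (d - 1) *
          (Finset.range (d + 1)).sup' (by simp) (fun s => ‖x - y‖ ^ s) := by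
  haveI : ProperSpace k := .of_nontriviallyNormedField_of_weaklyLocallyCompactSpace k
  set g : Fin n → V →L[k] k := fun j => LinearMap.toContinuousLinearMap (b.coord j) with hg
  set M : ℝ := 1 + ∑ j, ‖g j‖ with hM
  have hM1 : 1 ≤ M := by
    have : (0:ℝ) ≤ ∑ j, ‖g j‖ := Finset.sum_nonneg fun j _ => norm_nonneg _
    simp only [hM]; linarith
  have hM0 : (0:ℝ) ≤ M := by linarith
  have hcoord : ∀ (z : V) (j : Fin n), ‖b.repr z j‖ ≤ M * ‖z‖ := by
    intro z j
    have h1 : ‖g j z‖ ≤ ‖g j‖ * ‖z‖ := (g j).le_opNorm z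
    have h2 : ‖g j‖ ≤ M := by
      have : ‖g j‖ ≤ ∑ j', ‖g j'‖ :=
        Finset.single_le_sum (fun j' _ => norm_nonneg (g j')) (Finset.mem_univ j)
      linarith
    have h3 : (g j) z = b.repr z j := by simp [hg, Module.Basis.coord]
    rw [← h3]
    exact h1.trans (mul_le_mul_of_nonneg_right h2 (norm_nonneg z))
  set K : ℝ := 1 + ∑ i, ∑ α ∈ (P i).support, ‖coeff α (P i)‖ with hK
  have hKi : ∀ i : Fin r, ∑ α ∈ (P i).support, ‖coeff α (P i)‖ ≤ K := by
    intro i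
    have h1 : ∑ α ∈ (P i).support, ‖coeff α (P i)‖
        ≤ ∑ i', ∑ α ∈ (P i').support, ‖coeff α (P i')‖ :=
      Finset.single_le_sum (f := fun i' => ∑ α ∈ (P i').support, ‖coeff α (P i')‖)
        (fun i' _ => Finset.sum_nonneg fun α _ => norm_nonneg _) (Finset.mem_univ i)
    simp only [hK]; linarith
  have hK1 : (1:ℝ) ≤ K := by
    have : (0:ℝ) ≤ ∑ i, ∑ α ∈ (P i).support, ‖coeff α (P i)‖ :=
      Finset.sum_nonneg fun i _ => Finset.sum_nonneg fun α _ => norm_nonneg _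
    simp only [hK]; linarith
  have hdP : ∀ i : Fin r, (P i).totalDegree ≤ d := fun i =>
    hdeg ▸ Finset.le_sup (f := fun i : Fin r => (P i).totalDegree) (Finset.mem_univ i)
  refine ⟨K * (d * ((2*M) ^ d * M)), by positivity, ?_⟩
  intro x y hx i
  set S : ℝ := (Finset.range (d + 1)).sup' (by simp) (fun s => ‖x - y‖ ^ s) with hS
  set T : ℝ := max 1 ‖x - y‖ with hT
  have hT1 : (1:ℝ) ≤ T := le_max_left _ _
  have hTxy : ‖x - y‖ ≤ T := le_max_right _ _
  have hx0 : (0:ℝ) ≤ ‖x‖ := norm_nonneg x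
  set B : ℝ := 2 * M * (‖x‖ * T) with hB
  have hxT1 : (1:ℝ) ≤ ‖x‖ * T := by
    calc (1:ℝ) = 1 * 1 := by norm_num
      _ ≤ ‖x‖ * T := mul_le_mul hx hT1 zero_le_one hx0
  have hB1 : (1:ℝ) ≤ B := by
    rw [hB]
    calc (1:ℝ) ≤ ‖x‖ * T := hxT1
      _ ≤ 2 * M * (‖x‖ * T) := le_mul_of_one_le_left (by linarith) (by linarith)
  have hB0 : (0:ℝ) ≤ B := by linarith
  have h2T : (1:ℝ) ≤ 2 * T := by linarith
  set ε : ℝ := M * ‖x - y‖ with hε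
  have hε0 : (0:ℝ) ≤ ε := mul_nonneg hM0 (norm_nonneg _)
  -- bounds on coordinates
  have hu : ∀ j : Fin n, ‖b.repr x j‖ ≤ B := by
    intro j
    refine (hcoord x j).trans ?_
    calc M * ‖x‖ = M * ‖x‖ * 1 := by ring
      _ ≤ M * ‖x‖ * (2 * T) := by
          exact mul_le_mul_of_nonneg_left h2T (mul_nonneg hM0 hx0)
      _ = B := by rw [hB]; ring
  have hv : ∀ j : Fin n, ‖b.repr y j‖ ≤ B := by
    intro j
    refine (hcoord y j).trans ?_
    have h1 : ‖y‖ ≤ ‖x‖ + ‖x - y‖ := by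
      have h := norm_sub_norm_le y x
      rw [norm_sub_rev y x] at h
      linarith
    have e1 : ‖x‖ ≤ ‖x‖ * T := le_mul_of_one_le_right hx0 hT1
    have e2 : ‖x - y‖ ≤ ‖x‖ * T := hTxy.trans (le_mul_of_one_le_left (by linarith) hx)
    have hy : ‖y‖ ≤ 2 * (‖x‖ * T) := by linarith
    calc M * ‖y‖ ≤ M * (2 * (‖x‖ * T)) := mul_le_mul_of_nonneg_left hy hM0
      _ = B := by rw [hB]; ring
  have huv : ∀ j : Fin n, ‖b.repr x j - b.repr y j‖ ≤ ε := by
    intro j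
    have : b.repr x j - b.repr y j = b.repr (x - y) j := by simp
    rw [this]; exact hcoord (x - y) j
  -- S bounds
  have hS1 : (1:ℝ) ≤ S := by
    have h := Finset.le_sup' (fun s => ‖x - y‖ ^ s) (by simp : 0 ∈ Finset.range (d+1))
    simp only [pow_zero] at h
    exact h
  have hSd : ‖x - y‖ ^ d ≤ S :=
    Finset.le_sup' (fun s => ‖x - y‖ ^ s) (by simp : d ∈ Finset.range (d+1))
  have hTS : T ^ d ≤ S := by
    rcases le_total ‖x - y‖ 1 with h | h
    · have : T = 1 := max_eq_left h
      rw [this]; simpa using hS1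
    · have : T = ‖x - y‖ := max_eq_right h
      rw [this]; exact hSd
  -- per-monomial bound
  have hΔ : ∀ α ∈ (P i).support,
      ‖(∏ j ∈ α.support, (b.repr x) j ^ α j) - ∏ j ∈ α.support, (b.repr y) j ^ α j‖
        ≤ ↑d * B ^ (d-1) * ε := by
    intro α hmem
    have h0 := aux_prod hB1 hε0 α.support (fun j => b.repr x j) (fun j => b.repr y j) α
      (fun j _ => hu j) (fun j _ => hv j) (fun j _ => huv j)
    have hα : ∑ j ∈ α.support, α j ≤ d := by
      have h := MvPolynomial.le_totalDegree hmem
      exact le_trans (by simpa [Finsupp.sum] using h) (hdP i)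
    have h2 : ((∑ j ∈ α.support, α j : ℕ) : ℝ) * B ^ (∑ j ∈ α.support, α j) * ε
        ≤ ↑d * B ^ d * ε := by
      apply mul_le_mul_of_nonneg_right _ hε0
      exact mul_le_mul (Nat.cast_le.mpr hα) (pow_le_pow_right₀ hB1 hα)
        (by positivity) (Nat.cast_nonneg d)
    have hdd : B ^ d = B ^ (d-1) * B := by
      conv_lhs => rw [← Nat.succ_pred_eq_of_pos (show 0 < d by omega)]
      rw [pow_succ]
      rfl
    have hfin : B * ‖(∏ j ∈ α.support, (b.repr x) j ^ α j)
        - ∏ j ∈ α.support, (b.repr y) j ^ α j‖ ≤ (↑d * B ^ (d-1) * ε) * B := by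
      refine h0.trans (h2.trans_eq ?_)
      rw [hdd]; ring
    have hBpos : (0:ℝ) < B := by linarith
    rw [mul_comm] at hfin
    exact le_of_mul_le_mul_right hfin hBpos
  have heval : f i x - f i y = ∑ α ∈ (P i).support, coeff α (P i) *
      ((∏ j ∈ α.support, (b.repr x) j ^ α j) - ∏ j ∈ α.support, (b.repr y) j ^ α j) := by
    rw [hf, hf, eval_eq, eval_eq, ← Finset.sum_sub_distrib]
    exact Finset.sum_congr rfl fun α _ => (mul_sub _ _ _).symm
  have hX0 : (0:ℝ) ≤ ↑d * B ^ (d-1) * ε := by positivity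
  have hsum : ‖f i x - f i y‖ ≤ K * (↑d * B ^ (d-1) * ε) := by
    calc ‖f i x - f i y‖
        ≤ ∑ α ∈ (P i).support, ‖coeff α (P i) *
            ((∏ j ∈ α.support, (b.repr x) j ^ α j)
              - ∏ j ∈ α.support, (b.repr y) j ^ α j)‖ := by
          rw [heval]; exact norm_sum_le _ _
      _ = ∑ α ∈ (P i).support, ‖coeff α (P i)‖ *
            ‖(∏ j ∈ α.support, (b.repr x) j ^ α j)
              - ∏ j ∈ α.support, (b.repr y) j ^ α j‖ := by
          simp only [norm_mul]
      _ ≤ ∑ α ∈ (P i).support, ‖coeff α (P i)‖ * (↑d * B ^ (d-1) * ε) :=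
          Finset.sum_le_sum fun α hα =>
            mul_le_mul_of_nonneg_left (hΔ α hα) (norm_nonneg _)
      _ = (∑ α ∈ (P i).support, ‖coeff α (P i)‖) * (↑d * B ^ (d-1) * ε) := by
          rw [← Finset.sum_mul]
      _ ≤ K * (↑d * B ^ (d-1) * ε) := mul_le_mul_of_nonneg_right (hKi i) hX0
  -- rewrite B^(d-1) and finish
  have hBpow : B ^ (d-1) = (2*M) ^ (d-1) * (‖x‖ ^ (d-1) * T ^ (d-1)) := by
    rw [hB, mul_pow, mul_pow ‖x‖ T]
  have h2M : (2*M) ^ (d-1) ≤ (2*M) ^ d := pow_le_pow_right₀ (by linarith) (by omega)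
  have hT0 : (0:ℝ) ≤ T := by linarith
  have hTd : T ^ (d-1) * ‖x - y‖ ≤ S := by
    calc T ^ (d-1) * ‖x - y‖ ≤ T ^ (d-1) * T :=
          mul_le_mul_of_nonneg_left hTxy (pow_nonneg hT0 _)
      _ = T ^ d := by
          rw [← pow_succ]
          congr 1
          omega
      _ ≤ S := hTS
  have hmain : ↑d * B ^ (d-1) * ε ≤ (↑d * M) * ((2*M) ^ d * (‖x‖ ^ (d-1) * S)) := by
    have e1 : ↑d * B ^ (d-1) * ε
        = (↑d * M) * ((2*M) ^ (d-1) * (‖x‖ ^ (d-1) * (T ^ (d-1) * ‖x - y‖))) := by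
      rw [hBpow, hε]; ring
    rw [e1]
    apply mul_le_mul_of_nonneg_left _ (by positivity)
    apply mul_le_mul h2M
      (mul_le_mul_of_nonneg_left hTd (pow_nonneg hx0 _))
      (by positivity) (pow_nonneg (by linarith) _)
  calc ‖f i x - f i y‖ ≤ K * (↑d * B ^ (d-1) * ε) := hsum
    _ ≤ K * ((↑d * M) * ((2*M) ^ d * (‖x‖ ^ (d-1) * S))) :=
        mul_le_mul_of_nonneg_left hmain (by linarith)
    _ = K * (↑d * ((2*M) ^ d * M)) * ‖x‖ ^ (d-1) * S := by ring
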